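/- Let G be a subgroup of W(E6) that acts on the 27 lines with exactly three orbits of size 9 given by the three pairs of Steiner trihedra of a triplet. Then H^1(G, Pic) ≅ Z/3Z, where Pic ≅ Z^7 is the standard permutation-induced G-module on the divisor class lattice of the cubic surface. -/

import Mathlib

open Finset
set_option linter.unreachableTactic false
set_option linter.unusedTactic false
set_option linter.unnecessarySeqFocus false

/-- The Picard lattice `ℤ^7` of a smooth cubic surface in the blown-up model,
with basis `l, e₁, …, e₆`. -/
abbrev Pic : Type := Fin 7 → ℤ

/-- The intersection form `diag(1, -1, …, -1)`. -/
def inter (u v : Pic) : ℤ := u 0 * v 0 - ∑ i : Fin 6, u i.succ * v i.succ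

/-- The class `l` of a general line in `P²`. -/
def lcl : Pic := fun j => if j = 0 then 1 else 0

/-- The classes `e i` of the exceptional curves. -/
def ee (i : Fin 6) : Pic := fun j => if j = i.succ then 1 else 0

/-- The 6 lines `a i = e i`. -/
def A (i : Fin 6) : Pic := ee i

/-- The 6 lines `b i = 2l - e₁ - ⋯ - e₆ + e i`. -/
def B (i : Fin 6) : Pic := (2 : ℤ) • lcl - (∑ k : Fin 6, ee k) + ee i

/-- The 15 lines `c i j = l - e i - e j`. -/
def C (i j : Fin 6) : Pic := lcl - ee i - ee j

/-- The hyperplane class `h = 3l - e₁ - ⋯ - e₆`. -/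
def hcl : Pic := (3 : ℤ) • lcl - ∑ k : Fin 6, ee k

/-- The canonical class `K = -h`. -/
def Kcl : Pic := -hcl

/-- The set of the 27 lines on a smooth cubic surface (blown-up model). -/
def lines : Finset Pic :=
  (univ.image A) ∪ (univ.image B) ∪
    ((univ ×ˢ univ : Finset (Fin 6 × Fin 6)).filter (fun p => p.1 ≠ p.2)).image
      (fun p => C p.1 p.2)

/-- The 27 lines as a type. -/
abbrev Line : Type := ↥lines

/-- The Weyl group `W(E₆)`: the permutations of the 27 lines preserving the
intersection pairing. -/
def WE6 : Subgroup (Equiv.Perm Line) where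
  carrier := {σ | ∀ x y : Line, inter (σ x).1 (σ y).1 = inter x.1 y.1}
  one_mem' := fun _ _ => rfl
  mul_mem' := by
    intro a b ha hb x y
    simpa [Equiv.Perm.mul_apply] using (ha (b x) (b y)).trans (hb x y)
  inv_mem' := by
    intro a ha x y
    have h := ha (a⁻¹ x) (a⁻¹ y)
    simpa using h.symm

/-- The subgroup of permutations of the 27 lines stabilizing a given set `P` of classes. -/
def Stab (P : Finset Pic) : Subgroup (Equiv.Perm Line) where
  carrier := {σ | ∀ x : Line, x.1 ∈ P ↔ (σ x).1 ∈ P}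
  one_mem' := fun _ => Iff.rfl
  mul_mem' := by
    intro a b ha hb x
    simpa [Equiv.Perm.mul_apply] using (hb x).trans (ha (b x))
  inv_mem' := by
    intro a ha x
    have h := ha (a⁻¹ x)
    simpa using h.symm

/-- The 9 lines of the first pair of Steiner trihedra of the standard triplet. -/
def Δ1 : Finset Pic := {A 0, A 1, A 2, B 0, B 1, B 2, C 0 1, C 0 2, C 1 2}

/-- The 9 lines of the second pair. -/
def Δ2 : Finset Pic := {A 3, A 4, A 5, B 3, B 4, B 5, C 3 4, C 3 5, C 4 5}

/-- The 9 lines of the third pair. -/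
def Δ3 : Finset Pic :=
  {C 0 3, C 0 4, C 0 5, C 1 3, C 1 4, C 1 5, C 2 3, C 2 4, C 2 5}


lemma inter_add_left (u v y : Pic) : inter (u+v) y = inter u y + inter v y := by
  simp only [inter, Pi.add_apply, add_mul, Finset.sum_add_distrib]; ring

lemma inter_smul_left (z : ℤ) (u y : Pic) : inter (z • u) y = z * inter u y := by
  simp only [inter, Pi.smul_apply, smul_eq_mul, mul_sub, Finset.mul_sum, mul_assoc]

lemma inter_zero_left (y : Pic) : inter 0 y = 0 := by simp [inter]

lemma inter_neg_left (u y : Pic) : inter (-u) y = -inter u y := by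
  simp only [inter, Pi.neg_apply, neg_mul, Finset.sum_neg_distrib]; ring

lemma inter_sub_left (u v y : Pic) : inter (u-v) y = inter u y - inter v y := by
  rw [sub_eq_add_neg, inter_add_left, inter_neg_left]; ring

lemma inter_sum_left {ι : Type*} (s : Finset ι) (g : ι → Pic) (y : Pic) :
    inter (∑ i ∈ s, g i) y = ∑ i ∈ s, inter (g i) y := by
  induction s using Finset.cons_induction with
  | empty => simp [inter_zero_left]
  | cons a s ha ih => simp [Finset.sum_cons, inter_add_left, ih]

/-- coordinate constructor -/
def mk7 (a0 a1 a2 a3 a4 a5 a6 : ℤ) : Pic := fun j =>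
  if j = 0 then a0 else if j = 1 then a1 else if j = 2 then a2 else if j = 3 then a3
    else if j = 4 then a4 else if j = 5 then a5 else a6

lemma inter_expand (x y : Pic) :
    inter x y = x 0 * y 0 - (x 1 * y 1 + x 2 * y 2 + x 3 * y 3 + x 4 * y 4 + x 5 * y 5 + x 6 * y 6) := by
  have : ∀ g : Fin 6 → ℤ, ∑ i : Fin 6, g i = g 0 + g 1 + g 2 + g 3 + g 4 + g 5 := by
    intro g; rw [Fin.sum_univ_six]
  rw [inter, this]
  rfl
lemma pair_A_0 (x : Pic) : inter x (A 0) = -x 1 := by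
  rw [inter_expand, (by decide : (A 0 : Pic) = mk7 (0) (1) (0) (0) (0) (0) (0))]; simp +decide [mk7] <;> ring

lemma pair_A_1 (x : Pic) : inter x (A 1) = -x 2 := by
  rw [inter_expand, (by decide : (A 1 : Pic) = mk7 (0) (0) (1) (0) (0) (0) (0))]; simp +decide [mk7] <;> ring

lemma pair_A_2 (x : Pic) : inter x (A 2) = -x 3 := by
  rw [inter_expand, (by decide : (A 2 : Pic) = mk7 (0) (0) (0) (1) (0) (0) (0))]; simp +decide [mk7] <;> ring

lemma pair_A_3 (x : Pic) : inter x (A 3) = -x 4 := by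
  rw [inter_expand, (by decide : (A 3 : Pic) = mk7 (0) (0) (0) (0) (1) (0) (0))]; simp +decide [mk7] <;> ring

lemma pair_A_4 (x : Pic) : inter x (A 4) = -x 5 := by
  rw [inter_expand, (by decide : (A 4 : Pic) = mk7 (0) (0) (0) (0) (0) (1) (0))]; simp +decide [mk7] <;> ring

lemma pair_A_5 (x : Pic) : inter x (A 5) = -x 6 := by
  rw [inter_expand, (by decide : (A 5 : Pic) = mk7 (0) (0) (0) (0) (0) (0) (1))]; simp +decide [mk7] <;> ring

lemma pair_B_0 (x : Pic) : inter x (B 0) = 2 * x 0 + x 2 + x 3 + x 4 + x 5 + x 6 := by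
  rw [inter_expand, (by decide : (B 0 : Pic) = mk7 (2) (0) (-1) (-1) (-1) (-1) (-1))]; simp +decide [mk7] <;> ring

lemma pair_B_1 (x : Pic) : inter x (B 1) = 2 * x 0 + x 1 + x 3 + x 4 + x 5 + x 6 := by
  rw [inter_expand, (by decide : (B 1 : Pic) = mk7 (2) (-1) (0) (-1) (-1) (-1) (-1))]; simp +decide [mk7] <;> ring

lemma pair_B_2 (x : Pic) : inter x (B 2) = 2 * x 0 + x 1 + x 2 + x 4 + x 5 + x 6 := by
  rw [inter_expand, (by decide : (B 2 : Pic) = mk7 (2) (-1) (-1) (0) (-1) (-1) (-1))]; simp +decide [mk7] <;> ring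

lemma pair_B_3 (x : Pic) : inter x (B 3) = 2 * x 0 + x 1 + x 2 + x 3 + x 5 + x 6 := by
  rw [inter_expand, (by decide : (B 3 : Pic) = mk7 (2) (-1) (-1) (-1) (0) (-1) (-1))]; simp +decide [mk7] <;> ring

lemma pair_B_4 (x : Pic) : inter x (B 4) = 2 * x 0 + x 1 + x 2 + x 3 + x 4 + x 6 := by
  rw [inter_expand, (by decide : (B 4 : Pic) = mk7 (2) (-1) (-1) (-1) (-1) (0) (-1))]; simp +decide [mk7] <;> ring

lemma pair_B_5 (x : Pic) : inter x (B 5) = 2 * x 0 + x 1 + x 2 + x 3 + x 4 + x 5 := by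
  rw [inter_expand, (by decide : (B 5 : Pic) = mk7 (2) (-1) (-1) (-1) (-1) (-1) (0))]; simp +decide [mk7] <;> ring

lemma pair_C_0_1 (x : Pic) : inter x (C 0 1) = x 0 + x 1 + x 2 := by
  rw [inter_expand, (by decide : (C 0 1 : Pic) = mk7 (1) (-1) (-1) (0) (0) (0) (0))]; simp +decide [mk7] <;> ring

lemma pair_C_0_2 (x : Pic) : inter x (C 0 2) = x 0 + x 1 + x 3 := by
  rw [inter_expand, (by decide : (C 0 2 : Pic) = mk7 (1) (-1) (0) (-1) (0) (0) (0))]; simp +decide [mk7] <;> ring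

lemma pair_C_0_3 (x : Pic) : inter x (C 0 3) = x 0 + x 1 + x 4 := by
  rw [inter_expand, (by decide : (C 0 3 : Pic) = mk7 (1) (-1) (0) (0) (-1) (0) (0))]; simp +decide [mk7] <;> ring

lemma pair_C_0_4 (x : Pic) : inter x (C 0 4) = x 0 + x 1 + x 5 := by
  rw [inter_expand, (by decide : (C 0 4 : Pic) = mk7 (1) (-1) (0) (0) (0) (-1) (0))]; simp +decide [mk7] <;> ring

lemma pair_C_0_5 (x : Pic) : inter x (C 0 5) = x 0 + x 1 + x 6 := by
  rw [inter_expand, (by decide : (C 0 5 : Pic) = mk7 (1) (-1) (0) (0) (0) (0) (-1))]; simp +decide [mk7] <;> ring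

lemma pair_C_1_2 (x : Pic) : inter x (C 1 2) = x 0 + x 2 + x 3 := by
  rw [inter_expand, (by decide : (C 1 2 : Pic) = mk7 (1) (0) (-1) (-1) (0) (0) (0))]; simp +decide [mk7] <;> ring

lemma pair_C_1_3 (x : Pic) : inter x (C 1 3) = x 0 + x 2 + x 4 := by
  rw [inter_expand, (by decide : (C 1 3 : Pic) = mk7 (1) (0) (-1) (0) (-1) (0) (0))]; simp +decide [mk7] <;> ring

lemma pair_C_1_4 (x : Pic) : inter x (C 1 4) = x 0 + x 2 + x 5 := by
  rw [inter_expand, (by decide : (C 1 4 : Pic) = mk7 (1) (0) (-1) (0) (0) (-1) (0))]; simp +decide [mk7] <;> ring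

lemma pair_C_1_5 (x : Pic) : inter x (C 1 5) = x 0 + x 2 + x 6 := by
  rw [inter_expand, (by decide : (C 1 5 : Pic) = mk7 (1) (0) (-1) (0) (0) (0) (-1))]; simp +decide [mk7] <;> ring

lemma pair_C_2_3 (x : Pic) : inter x (C 2 3) = x 0 + x 3 + x 4 := by
  rw [inter_expand, (by decide : (C 2 3 : Pic) = mk7 (1) (0) (0) (-1) (-1) (0) (0))]; simp +decide [mk7] <;> ring

lemma pair_C_2_4 (x : Pic) : inter x (C 2 4) = x 0 + x 3 + x 5 := by
  rw [inter_expand, (by decide : (C 2 4 : Pic) = mk7 (1) (0) (0) (-1) (0) (-1) (0))]; simp +decide [mk7] <;> ring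

lemma pair_C_2_5 (x : Pic) : inter x (C 2 5) = x 0 + x 3 + x 6 := by
  rw [inter_expand, (by decide : (C 2 5 : Pic) = mk7 (1) (0) (0) (-1) (0) (0) (-1))]; simp +decide [mk7] <;> ring

lemma pair_C_3_4 (x : Pic) : inter x (C 3 4) = x 0 + x 4 + x 5 := by
  rw [inter_expand, (by decide : (C 3 4 : Pic) = mk7 (1) (0) (0) (0) (-1) (-1) (0))]; simp +decide [mk7] <;> ring

lemma pair_C_3_5 (x : Pic) : inter x (C 3 5) = x 0 + x 4 + x 6 := by
  rw [inter_expand, (by decide : (C 3 5 : Pic) = mk7 (1) (0) (0) (0) (-1) (0) (-1))]; simp +decide [mk7] <;> ring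

lemma pair_C_4_5 (x : Pic) : inter x (C 4 5) = x 0 + x 5 + x 6 := by
  rw [inter_expand, (by decide : (C 4 5 : Pic) = mk7 (1) (0) (0) (0) (0) (-1) (-1))]; simp +decide [mk7] <;> ring
/-- the auxiliary vector `w = e₄ + e₅ + e₆`. -/
def ww : Pic := ee 3 + ee 4 + ee 5

/-- orbit indicator pattern -/
def Qf : Pic → ℤ := fun p => if p ∈ Δ2 then 2 else if p ∈ Δ3 then 1 else 0

lemma hwQ : ∀ p ∈ lines, (3:ℤ) ∣ inter ww p - Qf p := by decide

lemma Qf1 : ∀ p ∈ Δ1, Qf p = 0 := by decide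
lemma Qf2 : ∀ p ∈ Δ2, Qf p = 2 := by decide
lemma Qf3 : ∀ p ∈ Δ3, Qf p = 1 := by decide

lemma D21 : ∀ p ∈ Δ2, p ∉ Δ1 := by decide
lemma D31 : ∀ p ∈ Δ3, p ∉ Δ1 := by decide
lemma D32 : ∀ p ∈ Δ3, p ∉ Δ2 := by decide

lemma cover : ∀ p ∈ lines, p ∈ Δ1 ∨ p ∈ Δ2 ∨ p ∈ Δ3 := by decide

lemma memA : ∀ i : Fin 6, A i ∈ lines := by decide
lemma memC01 : C 0 1 ∈ lines := by decide
lemma memC34 : C 3 4 ∈ lines := by decide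
lemma memC03 : C 0 3 ∈ lines := by decide

def LA (i : Fin 6) : Line := ⟨A i, memA i⟩
def LC01 : Line := ⟨C 0 1, memC01⟩
def LC34 : Line := ⟨C 3 4, memC34⟩
def LC03 : Line := ⟨C 0 3, memC03⟩

lemma memΔ1_iff (p : Pic) : p ∈ Δ1 ↔ p = A 0 ∨ p = A 1 ∨ p = A 2 ∨ p = B 0 ∨ p = B 1 ∨
    p = B 2 ∨ p = C 0 1 ∨ p = C 0 2 ∨ p = C 1 2 := by simp [Δ1]

lemma memΔ2_iff (p : Pic) : p ∈ Δ2 ↔ p = A 3 ∨ p = A 4 ∨ p = A 5 ∨ p = B 3 ∨ p = B 4 ∨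
    p = B 5 ∨ p = C 3 4 ∨ p = C 3 5 ∨ p = C 4 5 := by simp [Δ2]

lemma memΔ3_iff (p : Pic) : p ∈ Δ3 ↔ p = C 0 3 ∨ p = C 0 4 ∨ p = C 0 5 ∨ p = C 1 3 ∨
    p = C 1 4 ∨ p = C 1 5 ∨ p = C 2 3 ∨ p = C 2 4 ∨ p = C 2 5 := by simp [Δ3]

lemma pair_ext (z z' : Pic) (h : ∀ x : Line, inter z x.1 = inter z' x.1) : z = z' := by
  have e1 : inter z (A 0) = inter z' (A 0) := h (LA 0)
  have e2 : inter z (A 1) = inter z' (A 1) := h (LA 1)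
  have e3 : inter z (A 2) = inter z' (A 2) := h (LA 2)
  have e4 : inter z (A 3) = inter z' (A 3) := h (LA 3)
  have e5 : inter z (A 4) = inter z' (A 4) := h (LA 4)
  have e6 : inter z (A 5) = inter z' (A 5) := h (LA 5)
  have e0 : inter z (C 0 1) = inter z' (C 0 1) := h LC01
  rw [pair_A_0, pair_A_0] at e1
  rw [pair_A_1, pair_A_1] at e2
  rw [pair_A_2, pair_A_2] at e3
  rw [pair_A_3, pair_A_3] at e4
  rw [pair_A_4, pair_A_4] at e5
  rw [pair_A_5, pair_A_5] at e6
  rw [pair_C_0_1, pair_C_0_1] at e0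
  funext j
  fin_cases j <;> simp_all <;> linarith

lemma pair_dvd3 (z : Pic) (h : ∀ x : Line, (3:ℤ) ∣ inter z x.1) : ∀ j, (3:ℤ) ∣ z j := by
  have e1 : (3:ℤ) ∣ inter z (A 0) := h (LA 0)
  have e2 : (3:ℤ) ∣ inter z (A 1) := h (LA 1)
  have e3 : (3:ℤ) ∣ inter z (A 2) := h (LA 2)
  have e4 : (3:ℤ) ∣ inter z (A 3) := h (LA 3)
  have e5 : (3:ℤ) ∣ inter z (A 4) := h (LA 4)
  have e6 : (3:ℤ) ∣ inter z (A 5) := h (LA 5)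
  have e0 : (3:ℤ) ∣ inter z (C 0 1) := h LC01
  rw [pair_A_0] at e1; rw [pair_A_1] at e2; rw [pair_A_2] at e3
  rw [pair_A_3] at e4; rw [pair_A_4] at e5; rw [pair_A_5] at e6
  rw [pair_C_0_1] at e0
  intro j
  fin_cases j <;> simp_all <;> omega

lemma arith (n d1 d2 d3 : ℤ) (F : Pic)
    (w1 w2 w3 w4 w5 w6 wc01 wc34 wc03 : ℤ)
    (eA0 : n*w1 = d1 - F 1) (eA1 : n*w2 = d1 - F 2) (eA2 : n*w3 = d1 - F 3)
    (eA3 : n*w4 = d2 - F 4) (eA4 : n*w5 = d2 - F 5) (eA5 : n*w6 = d2 - F 6)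
    (eC01 : n*wc01 = d1 + (F 0 + F 1 + F 2))
    (eC34 : n*wc34 = d2 + (F 0 + F 4 + F 5))
    (eC03 : n*wc03 = d3 + (F 0 + F 1 + F 4))
    (p : Pic) (hp : p ∈ lines) (t d : ℤ)
    (ht : n*t = d + inter F p)
    (hd1 : p ∈ Δ1 → d = d1) (hd2 : p ∈ Δ2 → d = d2) (hd3 : p ∈ Δ3 → d = d3) :
    n * (t - (if p ∈ Δ1 then w1 else if p ∈ Δ2 then
          w4 - ((wc01 - 2*w1 + w2) - (wc34 - 2*w4 + w5)) else wc03 - (wc01 - 2*w1 + w2))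
      - inter (mk7 (wc01 - 2*w1 + w2) 0 (w1 - w2) (w1 - w3) 0 (w4 - w5) (w4 - w6)) p)
    = (F 1 - F 4) * (Qf p - inter ww p) := by
  rcases cover p hp with h1 | h2 | h3
  · rw [hd1 h1] at ht
    rcases (memΔ1_iff p).1 h1 with rfl|rfl|rfl|rfl|rfl|rfl|rfl|rfl|rfl <;>
    · simp only [pair_A_0, pair_A_1, pair_A_2, pair_A_3, pair_A_4, pair_A_5, pair_B_0, pair_B_1, pair_B_2, pair_B_3, pair_B_4, pair_B_5, pair_C_0_1, pair_C_0_2, pair_C_0_3, pair_C_0_4, pair_C_0_5, pair_C_1_2, pair_C_1_3, pair_C_1_4, pair_C_1_5, pair_C_2_3, pair_C_2_4, pair_C_2_5, pair_C_3_4, pair_C_3_5, pair_C_4_5] at ht ⊢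
      simp +decide only [mk7, ww, ee, Qf, Pi.add_apply, if_true, if_false]
      linarith [eA0, eA1, eA2, eA3, eA4, eA5, eC01, eC34, eC03]
  · rw [hd2 h2] at ht
    rcases (memΔ2_iff p).1 h2 with rfl|rfl|rfl|rfl|rfl|rfl|rfl|rfl|rfl <;>
    · simp only [pair_A_0, pair_A_1, pair_A_2, pair_A_3, pair_A_4, pair_A_5, pair_B_0, pair_B_1, pair_B_2, pair_B_3, pair_B_4, pair_B_5, pair_C_0_1, pair_C_0_2, pair_C_0_3, pair_C_0_4, pair_C_0_5, pair_C_1_2, pair_C_1_3, pair_C_1_4, pair_C_1_5, pair_C_2_3, pair_C_2_4, pair_C_2_5, pair_C_3_4, pair_C_3_5, pair_C_4_5] at ht ⊢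
      simp +decide only [mk7, ww, ee, Qf, Pi.add_apply, if_true, if_false]
      linarith [eA0, eA1, eA2, eA3, eA4, eA5, eC01, eC34, eC03]
  · rw [hd3 h3] at ht
    rcases (memΔ3_iff p).1 h3 with rfl|rfl|rfl|rfl|rfl|rfl|rfl|rfl|rfl <;>
    · simp only [pair_A_0, pair_A_1, pair_A_2, pair_A_3, pair_A_4, pair_A_5, pair_B_0, pair_B_1, pair_B_2, pair_B_3, pair_B_4, pair_B_5, pair_C_0_1, pair_C_0_2, pair_C_0_3, pair_C_0_4, pair_C_0_5, pair_C_1_2, pair_C_1_3, pair_C_1_4, pair_C_1_5, pair_C_2_3, pair_C_2_4, pair_C_2_5, pair_C_3_4, pair_C_3_5, pair_C_4_5] at ht ⊢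
      simp +decide only [mk7, ww, ee, Qf, Pi.add_apply, if_true, if_false]
      linarith [eA0, eA1, eA2, eA3, eA4, eA5, eC01, eC34, eC03]

lemma expand7 (v : Pic) : v = v 0 • C 0 1 + (v 0 + v 1) • A 0 + (v 0 + v 2) • A 1
    + v 3 • A 2 + v 4 • A 3 + v 5 • A 4 + v 6 • A 5 := by
  funext j
  fin_cases j <;>
    simp +decide [C, A, ee, lcl, Pi.add_apply, Pi.smul_apply, Pi.sub_apply, smul_eq_mul]

abbrev SameOrb (x y : Line) : Prop :=
  (x.1 ∈ Δ1 ∧ y.1 ∈ Δ1) ∨ (x.1 ∈ Δ2 ∧ y.1 ∈ Δ2) ∨ (x.1 ∈ Δ3 ∧ y.1 ∈ Δ3)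

lemma rel_symm {x y : Line} (h : SameOrb x y) : SameOrb y x := by tauto

lemma Qf_rel {x y : Line} (h : SameOrb x y) : Qf x.1 = Qf y.1 := by
  rcases h with ⟨a, b⟩ | ⟨a, b⟩ | ⟨a, b⟩
  · rw [Qf1 _ a, Qf1 _ b]
  · rw [Qf2 _ a, Qf2 _ b]
  · rw [Qf3 _ a, Qf3 _ b]

lemma smul3_cancelP {a b : Pic} (h : (3:ℤ) • a = (3:ℤ) • b) : a = b := by
  funext j
  have h' : (3:ℤ) * a j = 3 * b j := congrFun h j
  omega

section Main

variable (G : Subgroup (Equiv.Perm Line)) (hG : G ≤ WE6)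
  (ρ : Representation ℤ G Pic)
  (hρ : ∀ σ : G, ∀ x : Line, ρ σ x.1 = ((σ : Equiv.Perm Line) x).1)
  (horb : ∀ x y : Line, (∃ σ ∈ G, σ x = y) ↔ SameOrb x y)

include hG hρ horb

lemma pairσ (σ : G) (v : Pic) (x : Line) :
    inter (ρ σ v) x.1 = inter v (((σ : Equiv.Perm Line))⁻¹ x).1 := by
  set y : Line := ((σ : Equiv.Perm Line))⁻¹ x with hy
  have hx : (σ : Equiv.Perm Line) y = x := Equiv.apply_symm_apply _ x
  have key : ∀ z : Line, inter (ρ σ z.1) x.1 = inter z.1 y.1 := by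
    intro z
    rw [hρ σ z, ← hx]
    exact hG σ.2 z y
  have e01 : inter (ρ σ (C 0 1)) x.1 = inter (C 0 1) y.1 := key LC01
  have eA0 : inter (ρ σ (A 0)) x.1 = inter (A 0) y.1 := key (LA 0)
  have eA1 : inter (ρ σ (A 1)) x.1 = inter (A 1) y.1 := key (LA 1)
  have eA2 : inter (ρ σ (A 2)) x.1 = inter (A 2) y.1 := key (LA 2)
  have eA3 : inter (ρ σ (A 3)) x.1 = inter (A 3) y.1 := key (LA 3)
  have eA4 : inter (ρ σ (A 4)) x.1 = inter (A 4) y.1 := key (LA 4)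
  have eA5 : inter (ρ σ (A 5)) x.1 = inter (A 5) y.1 := key (LA 5)
  conv_lhs => rw [expand7 v]
  conv_rhs => rw [expand7 v]
  simp only [map_add, map_smul, inter_add_left, inter_smul_left]
  rw [e01, eA0, eA1, eA2, eA3, eA4, eA5]

lemma relOf (σ : G) (x : Line) : SameOrb x ((σ : Equiv.Perm Line) x) :=
  (horb x _).mp ⟨σ.1, σ.2, rfl⟩

lemma relInv (σ : G) (x : Line) : SameOrb x (((σ : Equiv.Perm Line))⁻¹ x) := by
  have := relOf G hG ρ hρ horb σ⁻¹ x
  simpa using this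

lemma transport {x y : Line} (h : SameOrb x y) : ∃ σ : G, (σ : Equiv.Perm Line) x = y := by
  obtain ⟨s, hs, e⟩ := (horb x y).mpr h
  exact ⟨⟨s, hs⟩, e⟩

/-- orbit base points -/
def bp (x : Line) : Line := if x.1 ∈ Δ1 then LA 0 else if x.1 ∈ Δ2 then LA 3 else LC03

lemma bp_rel (x : Line) : SameOrb (bp x) x := by
  unfold bp
  by_cases h1 : x.1 ∈ Δ1
  · rw [if_pos h1]; exact Or.inl ⟨by decide, h1⟩
  · by_cases h2 : x.1 ∈ Δ2
    · rw [if_neg h1, if_pos h2]; exact Or.inr (Or.inl ⟨by decide, h2⟩)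
    · rw [if_neg h1, if_neg h2]
      rcases cover x.1 x.2 with h | h | h
      · exact absurd h h1
      · exact absurd h h2
      · exact Or.inr (Or.inr ⟨by decide, h⟩)

lemma bp_eq {x y : Line} (h : SameOrb x y) : bp x = bp y := by
  unfold bp
  rcases h with ⟨a, b⟩ | ⟨a, b⟩ | ⟨a, b⟩
  · rw [if_pos a, if_pos b]
  · rw [if_neg (D21 _ a), if_pos a, if_neg (D21 _ b), if_pos b]
  · rw [if_neg (D31 _ a), if_neg (D32 _ a), if_neg (D31 _ b), if_neg (D32 _ b)]

lemma stab_vanish (f : G → Pic) (hf : ∀ g h : G, f (g * h) = ρ g (f h) + f g)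
    (b : Line) (τ : G) (hτ : (τ : Equiv.Perm Line) b = b) : inter (f τ) b.1 = 0 := by
  have hone : f 1 = 0 := by
    have h1 := hf 1 1
    rw [mul_one, map_one, Module.End.one_apply] at h1
    exact (right_eq_add.mp h1)
  have hpowfix : ∀ m : ℕ, ((τ ^ m : G) : Equiv.Perm Line) b = b := by
    intro m
    induction m with
    | zero => simp
    | succ k ih =>
      rw [pow_succ, Subgroup.coe_mul, Equiv.Perm.mul_apply, hτ]
      exact ih
  have hlin : ∀ m : ℕ, inter (f (τ ^ m)) b.1 = m * inter (f τ) b.1 := by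
    intro m
    induction m with
    | zero => rw [pow_zero, hone, inter_zero_left]; simp
    | succ k ih =>
      have hinvfix : (((τ ^ k : G) : Equiv.Perm Line))⁻¹ b = b := by
        rw [Equiv.Perm.inv_eq_iff_eq]; exact (hpowfix k).symm
      rw [pow_succ, hf (τ ^ k) τ, inter_add_left, pairσ G hG ρ hρ horb, hinvfix, ih]
      push_cast; ring
  have horder := hlin (orderOf τ)
  rw [pow_orderOf_eq_one, hone, inter_zero_left] at horder
  have hpos : 0 < orderOf τ := orderOf_pos τ
  have : ((orderOf τ : ℤ)) * inter (f τ) b.1 = 0 := horder.symm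
  rcases mul_eq_zero.mp this with h | h
  · exact absurd h (by exact_mod_cast hpos.ne')
  · exact h


def uu (σ : G) : Pic := fun j => ((ρ σ) ww j - ww j) / 3

lemma uu_spec (σ : G) : (3:ℤ) • uu G ρ σ = ρ σ ww - ww := by
  have hdvd : ∀ x : Line, (3:ℤ) ∣ inter (ρ σ ww - ww) x.1 := by
    intro x
    rw [inter_sub_left, pairσ G hG ρ hρ horb]
    have m1 := hwQ (((σ : Equiv.Perm Line))⁻¹ x).1 (((σ : Equiv.Perm Line))⁻¹ x).2
    have m2 := hwQ x.1 x.2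
    have hQ : Qf (((σ : Equiv.Perm Line))⁻¹ x).1 = Qf x.1 :=
      (Qf_rel (relInv G hG ρ hρ horb σ x)).symm
    omega
  have hj := pair_dvd3 _ hdvd
  funext j
  have h3 : (3:ℤ) ∣ (ρ σ) ww j - ww j := by simpa [Pi.sub_apply] using hj j
  show (3:ℤ) * (((ρ σ) ww j - ww j) / 3) = (ρ σ ww - ww) j
  rw [Int.mul_ediv_cancel' h3]; rfl

lemma uu_cocycle (g h : G) : uu G ρ (g * h) = ρ g (uu G ρ h) + uu G ρ g := by
  have h3 : (3:ℤ) • uu G ρ (g * h) = (3:ℤ) • (ρ g (uu G ρ h) + uu G ρ g) := by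
    rw [uu_spec G hG ρ hρ horb, smul_add, ← map_smul, uu_spec G hG ρ hρ horb,
      uu_spec G hG ρ hρ horb, map_mul, Module.End.mul_apply, map_sub]
    abel
  exact smul3_cancelP h3

lemma main_inj (k : ℤ) (v : Pic) (hkv : ∀ σ : G, ρ σ v - v = k • uu G ρ σ) : (3:ℤ) ∣ k := by
  set m : Pic := k • ww - (3:ℤ) • v with hm
  have hinv : ∀ σ : G, ρ σ m = m := by
    intro σ
    have h1 : ρ σ m - m = k • ((3:ℤ) • uu G ρ σ) - (3:ℤ) • (ρ σ v - v) := by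
      rw [hm, map_sub, map_smul, map_smul, uu_spec G hG ρ hρ horb, smul_sub, smul_sub]
      abel
    rw [hkv σ, smul_smul, smul_smul, mul_comm, sub_self] at h1
    exact sub_eq_zero.mp h1
  have hconst : ∀ x y : Line, SameOrb x y → inter m x.1 = inter m y.1 := by
    intro x y h
    obtain ⟨γ, hγ⟩ := transport G hG ρ hρ horb h
    have hp := pairσ G hG ρ hρ horb γ m y
    rw [hinv γ] at hp
    have hyx : ((γ : Equiv.Perm Line))⁻¹ y = x := Equiv.Perm.inv_eq_iff_eq.mpr hγ.symm
    rw [hyx] at hp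
    exact hp.symm
  have e2 : inter m (A 1) = inter m (A 0) := hconst (LA 1) (LA 0) (Or.inl ⟨by decide, by decide⟩)
  have e5 : inter m (A 4) = inter m (A 3) :=
    hconst (LA 4) (LA 3) (Or.inr (Or.inl ⟨by decide, by decide⟩))
  have ec1 : inter m (C 0 1) = inter m (A 0) := hconst LC01 (LA 0) (Or.inl ⟨by decide, by decide⟩)
  have ec2 : inter m (C 3 4) = inter m (A 3) :=
    hconst LC34 (LA 3) (Or.inr (Or.inl ⟨by decide, by decide⟩))
  rw [pair_A_1, pair_A_0] at e2
  rw [pair_A_4, pair_A_3] at e5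
  rw [pair_C_0_1, pair_A_0] at ec1
  rw [pair_C_3_4, pair_A_3] at ec2
  have hw1 : ww 1 = 0 := by decide
  have hw4 : ww 4 = 1 := by decide
  have hm1 : m 1 = -3 * v 1 := by
    rw [hm]; show k • ww 1 - (3:ℤ) • v 1 = -3 * v 1
    rw [hw1]; simp
  have hm4 : m 4 = k - 3 * v 4 := by
    rw [hm]; show k • ww 4 - (3:ℤ) • v 4 = k - 3 * v 4
    rw [hw4]; simp
  omega


end Main

section Main

variable (G : Subgroup (Equiv.Perm Line)) (hG : G ≤ WE6)
  (ρ : Representation ℤ G Pic)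
  (hρ : ∀ σ : G, ∀ x : Line, ρ σ x.1 = ((σ : Equiv.Perm Line) x).1)
  (horb : ∀ x y : Line, (∃ σ ∈ G, σ x = y) ↔ SameOrb x y)

include hG hρ horb

lemma main_surj (f : G → Pic) (hf : ∀ g h : G, f (g * h) = ρ g (f h) + f g) :
    ∃ (k : ℤ) (v : Pic), ∀ σ : G, f σ = k • uu G ρ σ + (ρ σ v - v) := by
  classical
  haveI : Fintype (↥G) := Fintype.ofFinite _
  have hone : f 1 = 0 := by
    have h1 := hf 1 1
    rw [mul_one, map_one, Module.End.one_apply] at h1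
    exact right_eq_add.mp h1
  have hex : ∀ x : Line, ∃ σ : G, (σ : Equiv.Perm Line) (bp x) = x :=
    fun x => transport G hG ρ hρ horb (bp_rel G hG ρ hρ horb x)
  choose sl hsl using hex
  set ν : Line → ℤ := fun x => inter (f (sl x)) x.1 with hνdef
  have key : ∀ (σ : G) (x : Line),
      inter (f σ) x.1 = ν x - ν (((σ : Equiv.Perm Line))⁻¹ x) := by
    intro σ x
    set y : Line := ((σ : Equiv.Perm Line))⁻¹ x with hy
    have hxy : (σ : Equiv.Perm Line) y = x := Equiv.apply_symm_apply _ _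
    have hbase : bp y = bp x := (bp_eq G hG ρ hρ horb (relInv G hG ρ hρ horb σ x)).symm
    have h1 : ((sl x : G) : Equiv.Perm Line) (bp x) = x := hsl x
    have h2 : ((sl y : G) : Equiv.Perm Line) (bp x) = y := by rw [← hbase]; exact hsl y
    set τ : G := (sl x)⁻¹ * σ * sl y with hτdef
    have hτ : (τ : Equiv.Perm Line) (bp x) = bp x := by
      rw [hτdef]
      simp only [Subgroup.coe_mul, InvMemClass.coe_inv, Equiv.Perm.mul_apply]
      rw [h2, hxy]
      exact Equiv.Perm.inv_eq_iff_eq.mpr h1.symm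
    have hfτ : inter (f τ) (bp x).1 = 0 := stab_vanish G hG ρ hρ horb f hf (bp x) τ hτ
    have hσdecomp : σ = sl x * (τ * (sl y)⁻¹) := by rw [hτdef]; group
    have hfMinv : f (sl y)⁻¹ = - (ρ (sl y)⁻¹ (f (sl y))) := by
      have h3 := hf (sl y)⁻¹ (sl y)
      rw [inv_mul_cancel, hone] at h3
      exact eq_neg_of_add_eq_zero_right h3.symm
    calc inter (f σ) x.1
        = inter (f (sl x * (τ * (sl y)⁻¹))) x.1 := by rw [← hσdecomp]
      _ = inter (ρ (sl x) (f (τ * (sl y)⁻¹))) x.1 + inter (f (sl x)) x.1 := by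
            rw [hf, inter_add_left]
      _ = inter (f (τ * (sl y)⁻¹)) (bp x).1 + ν x := by
            rw [pairσ G hG ρ hρ horb]
            have hsx : ((sl x : G) : Equiv.Perm Line)⁻¹ x = bp x :=
              Equiv.Perm.inv_eq_iff_eq.mpr h1.symm
            rw [hsx]
      _ = inter (ρ τ (f (sl y)⁻¹)) (bp x).1 + inter (f τ) (bp x).1 + ν x := by
            rw [hf τ ((sl y)⁻¹), inter_add_left]
      _ = inter (f (sl y)⁻¹) (bp x).1 + ν x := by
            rw [hfτ, pairσ G hG ρ hρ horb]
            have hτinv : ((τ : G) : Equiv.Perm Line)⁻¹ (bp x) = bp x := by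
              rw [Equiv.Perm.inv_eq_iff_eq]; exact hτ.symm
            rw [hτinv]; ring
      _ = - inter (f (sl y)) y.1 + ν x := by
            rw [hfMinv, inter_neg_left, pairσ G hG ρ hρ horb]
            have hsm : (((sl y)⁻¹ : G) : Equiv.Perm Line)⁻¹ (bp x) = y := by
              simp only [InvMemClass.coe_inv, inv_inv]; exact h2
            rw [hsm]
      _ = ν x - ν y := by simp only [hνdef]; ring
  set n : ℤ := (Fintype.card ↥G : ℤ) with hn
  have hn0 : n ≠ 0 := by
    rw [hn]; exact_mod_cast (Fintype.card_pos (α := ↥G)).ne'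
  set Fs : Pic := ∑ σ : ↥G, f σ with hFs
  set sfun : Line → ℤ := fun x => ∑ σ : ↥G, ν (((σ : G) : Equiv.Perm Line)⁻¹ x) with hsfun
  have havg : ∀ x : Line, n * ν x = sfun x + inter Fs x.1 := by
    intro x
    have ha : inter Fs x.1 = ∑ σ : ↥G, inter (f σ) x.1 := inter_sum_left _ _ _
    rw [ha, Finset.sum_congr rfl (fun σ _ => key σ x), Finset.sum_sub_distrib,
      Finset.sum_const, Finset.card_univ, hsfun, hn]
    rw [nsmul_eq_mul]
    push_cast
    ring
  have hsc : ∀ x y : Line, SameOrb x y → sfun x = sfun y := by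
    intro x y h
    obtain ⟨γ, hγ⟩ := transport G hG ρ hρ horb h
    simp only [hsfun]
    refine Fintype.sum_bijective (fun σ : ↥G => γ * σ) (Group.mulLeft_bijective γ)
      (fun σ : ↥G => ν (((σ : G) : Equiv.Perm Line)⁻¹ x))
      (fun σ : ↥G => ν (((σ : G) : Equiv.Perm Line)⁻¹ y)) ?_
    intro σ
    show ν (((σ : G) : Equiv.Perm Line)⁻¹ x) = ν (((γ * σ : G) : Equiv.Perm Line)⁻¹ y)
    congr 1
    rw [Subgroup.coe_mul, mul_inv_rev, Equiv.Perm.mul_apply,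
      show ((γ : Equiv.Perm Line))⁻¹ y = x from Equiv.Perm.inv_eq_iff_eq.mpr hγ.symm]
  have sA1 : sfun (LA 1) = sfun (LA 0) := hsc (LA 1) (LA 0) (Or.inl ⟨by decide, by decide⟩)
  have sA2 : sfun (LA 2) = sfun (LA 0) := hsc (LA 2) (LA 0) (Or.inl ⟨by decide, by decide⟩)
  have sA4 : sfun (LA 4) = sfun (LA 3) := hsc (LA 4) (LA 3) (Or.inr (Or.inl ⟨by decide, by decide⟩))
  have sA5 : sfun (LA 5) = sfun (LA 3) := hsc (LA 5) (LA 3) (Or.inr (Or.inl ⟨by decide, by decide⟩))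
  have sC01 : sfun LC01 = sfun (LA 0) := hsc LC01 (LA 0) (Or.inl ⟨by decide, by decide⟩)
  have sC34 : sfun LC34 = sfun (LA 3) := hsc LC34 (LA 3) (Or.inr (Or.inl ⟨by decide, by decide⟩))
  have eA0 : n * ν (LA 0) = sfun (LA 0) - Fs 1 := by
    have h := havg (LA 0); rw [show inter Fs (LA 0).1 = -Fs 1 from pair_A_0 Fs] at h; linarith
  have eA1 : n * ν (LA 1) = sfun (LA 0) - Fs 2 := by
    have h := havg (LA 1); rw [show inter Fs (LA 1).1 = -Fs 2 from pair_A_1 Fs, sA1] at h; linarith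
  have eA2 : n * ν (LA 2) = sfun (LA 0) - Fs 3 := by
    have h := havg (LA 2); rw [show inter Fs (LA 2).1 = -Fs 3 from pair_A_2 Fs, sA2] at h; linarith
  have eA3 : n * ν (LA 3) = sfun (LA 3) - Fs 4 := by
    have h := havg (LA 3); rw [show inter Fs (LA 3).1 = -Fs 4 from pair_A_3 Fs] at h; linarith
  have eA4 : n * ν (LA 4) = sfun (LA 3) - Fs 5 := by
    have h := havg (LA 4); rw [show inter Fs (LA 4).1 = -Fs 5 from pair_A_4 Fs, sA4] at h; linarith
  have eA5 : n * ν (LA 5) = sfun (LA 3) - Fs 6 := by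
    have h := havg (LA 5); rw [show inter Fs (LA 5).1 = -Fs 6 from pair_A_5 Fs, sA5] at h; linarith
  have eC01 : n * ν LC01 = sfun (LA 0) + (Fs 0 + Fs 1 + Fs 2) := by
    have h := havg LC01
    rw [show inter Fs (LC01).1 = Fs 0 + Fs 1 + Fs 2 from pair_C_0_1 Fs, sC01] at h; linarith
  have eC34 : n * ν LC34 = sfun (LA 3) + (Fs 0 + Fs 4 + Fs 5) := by
    have h := havg LC34
    rw [show inter Fs (LC34).1 = Fs 0 + Fs 4 + Fs 5 from pair_C_3_4 Fs, sC34] at h; linarith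
  have eC03 : n * ν LC03 = sfun LC03 + (Fs 0 + Fs 1 + Fs 4) := by
    have h := havg LC03
    rw [show inter Fs (LC03).1 = Fs 0 + Fs 1 + Fs 4 from pair_C_0_3 Fs] at h; linarith
  set vv : Pic := mk7 (ν LC01 - 2*ν (LA 0) + ν (LA 1)) 0 (ν (LA 0) - ν (LA 1))
     (ν (LA 0) - ν (LA 2)) 0 (ν (LA 3) - ν (LA 4)) (ν (LA 3) - ν (LA 5)) with hvv
  set cp : Line → ℤ := fun x => if x.1 ∈ Δ1 then ν (LA 0) else if x.1 ∈ Δ2 then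
      ν (LA 3) - ((ν LC01 - 2*ν (LA 0) + ν (LA 1)) - (ν LC34 - 2*ν (LA 3) + ν (LA 4)))
      else ν LC03 - (ν LC01 - 2*ν (LA 0) + ν (LA 1)) with hcp
  have harith : ∀ x : Line,
      n * (ν x - cp x - inter vv x.1) = (Fs 1 - Fs 4) * (Qf x.1 - inter ww x.1) := by
    intro x
    have hd1 : x.1 ∈ Δ1 → sfun x = sfun (LA 0) := fun hx => hsc x (LA 0) (Or.inl ⟨hx, by decide⟩)
    have hd2 : x.1 ∈ Δ2 → sfun x = sfun (LA 3) :=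
      fun hx => hsc x (LA 3) (Or.inr (Or.inl ⟨hx, by decide⟩))
    have hd3 : x.1 ∈ Δ3 → sfun x = sfun LC03 :=
      fun hx => hsc x LC03 (Or.inr (Or.inr ⟨hx, by decide⟩))
    have h := arith n (sfun (LA 0)) (sfun (LA 3)) (sfun LC03) Fs (ν (LA 0)) (ν (LA 1))
      (ν (LA 2)) (ν (LA 3)) (ν (LA 4)) (ν (LA 5)) (ν LC01) (ν LC34) (ν LC03)
      eA0 eA1 eA2 eA3 eA4 eA5 eC01 eC34 eC03 x.1 x.2 (ν x) (sfun x) (havg x) hd1 hd2 hd3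
    rw [hcp, hvv]
    exact h
  set s : ℤ := (ν LC01 - 2*ν (LA 0) + ν (LA 1)) - (ν LC34 - 2*ν (LA 3) + ν (LA 4)) with hss
  have hs : n * s = 3 * (Fs 1 - Fs 4) := by
    rw [hss]; linear_combination eC01 - 2*eA0 + eA1 - (eC34 - 2*eA3 + eA4)
  have hfin : ∀ x : Line, 3 * (ν x - cp x - inter vv x.1) = s * (Qf x.1 - inter ww x.1) := by
    intro x
    have h2 : n * (3 * (ν x - cp x - inter vv x.1)) = n * (s * (Qf x.1 - inter ww x.1)) := by
      linear_combination 3 * harith x - (Qf x.1 - inter ww x.1) * hs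
    exact mul_left_cancel₀ hn0 h2
  refine ⟨s, -vv, ?_⟩
  intro σ
  apply smul3_cancelP
  apply pair_ext
  intro x
  set y : Line := ((σ : Equiv.Perm Line))⁻¹ x with hy
  have kx := key σ x
  have hx1 := hfin x
  have hx2 := hfin y
  have hrel : SameOrb x y := relInv G hG ρ hρ horb σ x
  have hcpc : cp y = cp x := by
    rcases hrel with ⟨a, b⟩ | ⟨a, b⟩ | ⟨a, b⟩ <;> simp only [hcp]
    · rw [if_pos b, if_pos a]
    · rw [if_neg (D21 _ b), if_pos b, if_neg (D21 _ a), if_pos a]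
    · rw [if_neg (D31 _ b), if_neg (D32 _ b), if_neg (D31 _ a), if_neg (D32 _ a)]
  have hQc : Qf y.1 = Qf x.1 := (Qf_rel hrel).symm
  rw [hcpc, hQc] at hx2
  have hu : 3 * inter (uu G ρ σ) x.1 = inter ww y.1 - inter ww x.1 := by
    rw [← inter_smul_left, uu_spec G hG ρ hρ horb, inter_sub_left, pairσ G hG ρ hρ horb]
  have hv : inter (ρ σ vv) x.1 = inter vv y.1 := pairσ G hG ρ hρ horb σ vv x
  simp only [map_neg, inter_smul_left, inter_add_left, inter_sub_left, inter_neg_left]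
  rw [kx, hv]
  linear_combination hx1 - hx2 - s * hu

end Main


open groupCohomology

lemma mem_cob₁_iff_aux {G : Type} [Group G] (A : Rep ℤ G) (f : G → A) :
    f ∈ coboundaries₁ A ↔ ∃ x : A, ∀ g : G, A.ρ g x - x = f g := by
  constructor
  · rintro ⟨x, hx⟩
    exact ⟨x, fun g => congrFun hx g⟩
  · rintro ⟨x, hx⟩
    exact ⟨x, funext hx⟩

theorem stmt9 (G : Subgroup (Equiv.Perm Line)) (hG : G ≤ WE6)
    (horb : ∀ x y : Line, (∃ σ ∈ G, σ x = y) ↔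
      ((x.1 ∈ Δ1 ∧ y.1 ∈ Δ1) ∨ (x.1 ∈ Δ2 ∧ y.1 ∈ Δ2) ∨ (x.1 ∈ Δ3 ∧ y.1 ∈ Δ3)))
    (ρ : Representation ℤ G Pic)
    (hρ : ∀ σ : G, ∀ x : Line, ρ σ x.1 = ((σ : Equiv.Perm Line) x).1) :
    Nonempty (groupCohomology.H1 (Rep.of ρ) ≃+ ZMod 3) := by
  classical
  have humem : uu G ρ ∈ cocycles₁ (Rep.of ρ) := by
    rw [mem_cocycles₁_iff]
    intro g h
    exact uu_cocycle G hG ρ hρ horb g h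
  set su : cocycles₁ (Rep.of ρ) := ⟨uu G ρ, humem⟩ with hsu
  set gH := H1π (Rep.of ρ) su with hgH
  have hcob : ∀ c : cocycles₁ (Rep.of ρ),
      H1π (Rep.of ρ) c = 0 ↔ ⇑c ∈ coboundaries₁ (Rep.of ρ) :=
    fun c => H1π_eq_zero_iff c
  have h3 : (3:ℤ) • gH = 0 := by
    rw [hgH, ← map_zsmul, hcob]
    rw [mem_cob₁_iff_aux]
    refine ⟨ww, fun g => ?_⟩
    show ρ g ww - ww = (3:ℤ) • uu G ρ g
    exact (uu_spec G hG ρ hρ horb g).symm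
  set φ : ℤ →+ H1 (Rep.of ρ) := zmultiplesHom _ gH with hφ
  have hφk : ∀ k : ℤ, φ k = k • gH := fun k => rfl
  have hφ3 : φ 3 = 0 := by rw [hφk]; exact h3
  set ψ : ZMod 3 →+ H1 (Rep.of ρ) := ZMod.lift 3 ⟨φ, hφ3⟩ with hψ
  have hψk : ∀ k : ℤ, ψ (k : ZMod 3) = k • gH := by
    intro k
    rw [hψ, ZMod.lift_coe]
    exact hφk k
  have hsurj : Function.Surjective ψ := by
    intro xH
    obtain ⟨c, rfl⟩ := (ModuleCat.epi_iff_surjective (H1π (Rep.of ρ))).1 inferInstance xH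
    set cc : ↥G → Pic := fun g => c g with hccdef
    have hfc : ∀ g h : ↥G, cc (g * h) = ρ g (cc h) + cc g :=
      fun g h => (mem_cocycles₁_iff (A := Rep.of ρ) c).1 c.2 g h
    obtain ⟨k, v, hk⟩ := main_surj G hG ρ hρ horb cc hfc
    refine ⟨(k : ZMod 3), ?_⟩
    rw [hψk k]
    have hmem : ⇑(k • su - c) ∈ coboundaries₁ (Rep.of ρ) := by
      rw [mem_cob₁_iff_aux]
      refine ⟨-v, fun g => ?_⟩
      show ρ g (-v) - (-v) = k • uu G ρ g - cc g
      rw [hk g, map_neg]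
      abel
    have hq : k • gH = H1π (Rep.of ρ) c := by
      rw [hgH, ← map_zsmul, ← sub_eq_zero, ← map_sub, hcob]
      exact hmem
    exact hq
  have hinj : Function.Injective ψ := by
    rw [injective_iff_map_eq_zero]
    intro a ha
    obtain ⟨k, rfl⟩ := ZMod.intCast_surjective a
    rw [hψk] at ha
    have hmem : ⇑(k • su) ∈ coboundaries₁ (Rep.of ρ) := by
      rw [← hcob, map_zsmul, ← hgH]
      exact ha
    obtain ⟨v, hv⟩ := (mem_cob₁_iff_aux _ _).1 hmem
    have h3k : (3:ℤ) ∣ k := by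
      apply main_inj G hG ρ hρ horb k v
      intro σ
      exact hv σ
    exact (ZMod.intCast_zmod_eq_zero_iff_dvd k 3).2 (by exact_mod_cast h3k)
  exact ⟨(AddEquiv.ofBijective ψ ⟨hinj, hsurj⟩).symm⟩
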